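/- Let k be a field of characteristic 0 not containing a primitive third root of unity. Then PGL_3(k) contains no subgroup isomorphic to (Z/3Z)^2. -/

import Mathlib

open Polynomial Matrix

namespace Stmt10Aux

variable {k : Type} [Field k]

lemma coeffs_zero {M : Matrix (Fin 3) (Fin 3) k}
    (hns : ∀ a : k, M ≠ a • 1) {x y : k}
    (hxy : x • M + y • (1 : Matrix (Fin 3) (Fin 3) k) = 0) : x = 0 ∧ y = 0 := by
  rcases eq_or_ne x 0 with hx | hx
  · subst hx
    simp only [zero_smul, zero_add, smul_eq_zero] at hxy
    rcases hxy with hy | h1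
    · exact ⟨rfl, hy⟩
    · exact absurd h1 one_ne_zero
  · exfalso
    apply hns (x⁻¹ * (-y))
    have hx2 : x • M = (-y) • (1 : Matrix (Fin 3) (Fin 3) k) := by
      rw [neg_smul]; linear_combination (norm := module) hxy
    calc M = x⁻¹ • (x • M) := by rw [smul_smul, inv_mul_cancel₀ hx, one_smul]
      _ = (x⁻¹ * (-y)) • (1 : Matrix (Fin 3) (Fin 3) k) := by rw [hx2, smul_smul]

lemma eval_charpoly' (M : Matrix (Fin 3) (Fin 3) k) (r : k) :
    M.charpoly.eval r = (r • (1 : Matrix (Fin 3) (Fin 3) k) - M).det := by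
  rw [Matrix.charpoly, ← coe_evalRingHom, RingHom.map_det]
  congr 1
  ext i j
  rcases eq_or_ne i j with rfl | hij
  · simp [charmatrix_apply_eq, Matrix.one_apply]
  · simp [charmatrix_apply_ne _ _ _ hij, Matrix.one_apply, hij]

lemma trace_eq_zero [CharZero k] (h : ¬ ∃ ζ : k, ζ ^ 3 = 1 ∧ ζ ≠ 1)
    {M : Matrix (Fin 3) (Fin 3) k} {c : k} (hc : c ≠ 0)
    (h3 : M ^ 3 = c • 1) (hns : ∀ a : k, M ≠ a • 1) : M.trace = 0 := by
  have hroot3 : ∀ η : k, η ^ 2 + η + 1 = 0 → False := by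
    intro η hη
    apply h
    refine ⟨η, by linear_combination (η - 1) * hη, ?_⟩
    rintro rfl; norm_num at hη
  have hmon : (M.charpoly).Monic := M.charpoly_monic
  have hdeg : (M.charpoly).natDegree = 3 := by simp
  have hCH : aeval M M.charpoly = (0 : Matrix (Fin 3) (Fin 3) k) := M.aeval_self_charpoly
  have hc3 : M.charpoly.coeff 3 = 1 := by
    have := hmon.coeff_natDegree; rwa [hdeg] at this
  have hsum : M.charpoly.coeff 0 • (1 : Matrix (Fin 3) (Fin 3) k) + M.charpoly.coeff 1 • M
      + M.charpoly.coeff 2 • M ^ 2 + c • 1 = 0 := by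
    have e := (aeval_eq_sum_range (p := M.charpoly) M).symm.trans hCH
    rw [hdeg, Finset.sum_range_succ, Finset.sum_range_succ, Finset.sum_range_succ,
      Finset.sum_range_one, hc3, one_smul, h3] at e
    simpa [pow_zero, pow_one] using e
  have htr : M.trace = -M.charpoly.coeff 2 := by
    have := Matrix.trace_eq_neg_charpoly_coeff M
    simpa using this
  rw [htr, neg_eq_zero]
  by_contra hc2
  -- a quadratic relation for M
  obtain ⟨u, v, hq0⟩ : ∃ u v : k, M ^ 2 = u • M + v • (1 : Matrix (Fin 3) (Fin 3) k) := by
    refine ⟨(M.charpoly.coeff 2)⁻¹ * (-(M.charpoly.coeff 1)),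
      (M.charpoly.coeff 2)⁻¹ * (-(M.charpoly.coeff 0 + c)), ?_⟩
    have e1 : M.charpoly.coeff 2 • M ^ 2 = (-(M.charpoly.coeff 1)) • M
        + (-(M.charpoly.coeff 0 + c)) • (1 : Matrix (Fin 3) (Fin 3) k) := by
      linear_combination (norm := module) hsum
    calc M ^ 2 = (M.charpoly.coeff 2)⁻¹ • (M.charpoly.coeff 2 • M ^ 2) := by
          rw [smul_smul, inv_mul_cancel₀ hc2, one_smul]
      _ = _ := by rw [e1, smul_add, smul_smul, smul_smul]
  have e2 : c • (1 : Matrix (Fin 3) (Fin 3) k) = (u * u + v) • M + (u * v) • 1 := by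
    rw [← h3, pow_succ, hq0, add_mul, smul_mul_assoc, smul_mul_assoc, one_mul,
      ← pow_two, hq0]
    module
  obtain ⟨h1, h2⟩ := coeffs_zero hns (x := u * u + v) (y := u * v - c)
    (by linear_combination (norm := module) -e2)
  have hv : v = -(u * u) := by linear_combination h1
  have hcu : c = -(u * u * u) := by linear_combination -h2 + u * h1
  rw [hv] at hq0
  have hu0 : u ≠ 0 := by
    intro hu; rw [hu] at hcu; simp at hcu; exact hc hcu
  -- the quadratic polynomial q = X^2 - uX + u^2
  set q : k[X] := X ^ 2 + (C (-u) * X + C (u ^ 2)) with hq_def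
  have hqmon : q.Monic := by
    apply monic_X_pow_add
    exact lt_of_le_of_lt degree_linear_le (by norm_num)
  have hqdeg : q.natDegree = 2 := by
    have hqq : q = C 1 * X ^ 2 + C (-u) * X + C (u ^ 2) := by
      rw [C_1, one_mul, add_assoc]
    rw [hqq]
    exact natDegree_quadratic one_ne_zero
  have haq : aeval M q = 0 := by
    have : aeval M q = M ^ 2 + ((-u) • M + (u ^ 2) • (1 : Matrix (Fin 3) (Fin 3) k)) := by
      rw [hq_def, map_add, map_add, map_pow, aeval_X, _root_.map_mul, aeval_C, aeval_X,
        aeval_C, Algebra.algebraMap_eq_smul_one, Algebra.algebraMap_eq_smul_one,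
        smul_mul_assoc, one_mul]
    rw [this, hq0]
    module
  -- division with remainder
  have hdiv : M.charpoly %ₘ q + q * (M.charpoly /ₘ q) = M.charpoly :=
    modByMonic_add_div _ q
  have hrm : aeval M (M.charpoly %ₘ q) = 0 := by
    have e : M.charpoly %ₘ q = M.charpoly - q * (M.charpoly /ₘ q) := by
      linear_combination hdiv
    rw [e, map_sub, _root_.map_mul, hCH, haq, zero_mul, sub_zero]
  have hrdeg : (M.charpoly %ₘ q).natDegree ≤ 1 := by
    have := natDegree_modByMonic_lt M.charpoly hqmon (by
      intro h1; rw [h1, natDegree_one] at hqdeg; omega)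
    omega
  have hrform := eq_X_add_C_of_natDegree_le_one hrdeg
  have hr0 : M.charpoly %ₘ q = 0 := by
    rw [hrform, _root_.map_add, _root_.map_mul, aeval_C, aeval_X, aeval_C,
      Algebra.algebraMap_eq_smul_one, Algebra.algebraMap_eq_smul_one,
      smul_mul_assoc, one_mul] at hrm
    obtain ⟨ha, hb⟩ := coeffs_zero hns hrm
    rw [hrform, ha, hb]
    simp
  have hps : M.charpoly = q * (M.charpoly /ₘ q) := by
    rw [hr0, zero_add] at hdiv; exact hdiv.symm
  have hsmon : (M.charpoly /ₘ q).Monic :=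
    hqmon.of_mul_monic_left (by rw [← hps]; exact hmon)
  have hsdeg : (M.charpoly /ₘ q).natDegree = 1 := by
    have e := hqmon.natDegree_mul hsmon
    rw [← hps, hdeg, hqdeg] at e
    omega
  obtain ⟨b, hsform⟩ : ∃ b : k, M.charpoly /ₘ q = X + C b := ⟨_, hsmon.eq_X_add_C hsdeg⟩
  obtain ⟨r, hproot⟩ : ∃ r : k, M.charpoly.eval r = 0 := by
    refine ⟨-b, ?_⟩
    rw [hps, eval_mul, hsform]
    simp
  rcases eq_or_ne (q.eval r) 0 with hqr | hqr
  · -- q has a root in k : primitive cube root of unity exists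
    have hqe : r ^ 2 - u * r + u ^ 2 = 0 := by
      rw [hq_def] at hqr
      simp only [eval_add, eval_mul, eval_pow, eval_X, eval_C] at hqr
      linear_combination hqr
    refine hroot3 (-(r / u)) ?_
    have expand : (-(r / u)) ^ 2 + (-(r / u)) + 1 = (r ^ 2 - u * r + u ^ 2) / u ^ 2 := by
      field_simp
      ring
    rw [expand, hqe, zero_div]
  · -- M - r • 1 is invertible, but its determinant vanishes
    have hqev : q.eval r = r ^ 2 - u * r + u ^ 2 := by
      rw [hq_def]
      simp only [eval_add, eval_mul, eval_pow, eval_X, eval_C]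
      ring
    have hdet0 : (r • (1 : Matrix (Fin 3) (Fin 3) k) - M).det = 0 := by
      rw [← eval_charpoly', hproot]
    have key : ∀ X Y : Matrix (Fin 3) (Fin 3) k,
        X = M - r • 1 → Y = M + (r - u) • 1 → X * Y = (-(q.eval r)) • 1 ∧
          Y * X = (-(q.eval r)) • 1 := by
      intro X Y hX hY
      subst hX; subst hY
      have hMM : M * M = u • M + -(u * u) • (1 : Matrix (Fin 3) (Fin 3) k) := by
        rw [← pow_two]; exact hq0
      constructor
      · rw [sub_mul, mul_add, mul_add]
        simp only [smul_mul_assoc, mul_smul_comm, one_mul, mul_one, smul_smul]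
        rw [hMM, hqev]
        module
      · rw [add_mul, mul_sub, mul_sub]
        simp only [smul_mul_assoc, mul_smul_comm, one_mul, mul_one, smul_smul]
        rw [hMM, hqev]
        module
    obtain ⟨k1, k2⟩ := key _ _ rfl rfl
    have hinv : (M - r • (1 : Matrix (Fin 3) (Fin 3) k)) *
        ((-(q.eval r))⁻¹ • (M + (r - u) • 1)) = 1 ∧
        ((-(q.eval r))⁻¹ • (M + (r - u) • 1)) *
        (M - r • (1 : Matrix (Fin 3) (Fin 3) k)) = 1 := by
      constructor
      · rw [mul_smul_comm, k1, smul_smul, inv_mul_cancel₀ (neg_ne_zero.mpr hqr), one_smul]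
      · rw [smul_mul_assoc, k2, smul_smul, inv_mul_cancel₀ (neg_ne_zero.mpr hqr), one_smul]
    have hunit : IsUnit (M - r • (1 : Matrix (Fin 3) (Fin 3) k)) :=
      ⟨⟨_, _, hinv.1, hinv.2⟩, rfl⟩
    have hud : IsUnit (M - r • (1 : Matrix (Fin 3) (Fin 3) k)).det :=
      (Matrix.isUnit_iff_isUnit_det _).mp hunit
    rw [show M - r • (1 : Matrix (Fin 3) (Fin 3) k) = -(r • 1 - M) by rw [neg_sub],
      Matrix.det_neg, hdet0] at hud
    simp at hud





/-- transvection-like unit -/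
def tunit (i j : Fin 3) (hij : i ≠ j) : GL (Fin 3) k where
  val := 1 + single i j 1
  inv := 1 - single i j 1
  val_inv := by
    have hE : single i j (1 : k) * single i j 1 = 0 :=
      single_mul_single_of_ne _ _ _ _ (Ne.symm hij) 1
    simp [mul_sub, add_mul, hE]
  inv_val := by
    have hE : single i j (1 : k) * single i j 1 = 0 :=
      single_mul_single_of_ne _ _ _ _ (Ne.symm hij) 1
    simp [sub_mul, mul_add, hE]

lemma mem_center_iff {X : GL (Fin 3) k} :
    X ∈ Subgroup.center (GL (Fin 3) k) ↔
      ∃ c : k, (X : Matrix (Fin 3) (Fin 3) k) = c • 1 := by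
  constructor
  · intro hX
    have hc := Subgroup.mem_center_iff.mp hX
    have hcomm : ∀ i j : Fin 3, i ≠ j →
        Commute (single i j (1 : k)) (X : Matrix (Fin 3) (Fin 3) k) := by
      intro i j hij
      have := congrArg Units.val (hc (tunit i j hij))
      simp only [Units.val_mul] at this
      have hval : Units.val (tunit i j hij)
          = (1 + single i j 1 : Matrix (Fin 3) (Fin 3) k) := rfl
      rw [hval, add_mul, mul_add, one_mul, mul_one] at this
      unfold Commute SemiconjBy
      linear_combination (norm := abel) this
    obtain ⟨c, hcX⟩ := mem_range_scalar_of_commute_single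
      (fun i j hij => hcomm i j hij)
    exact ⟨c, by rw [← hcX]; ext i j; simp [Matrix.scalar_apply, Matrix.smul_apply,
      Matrix.one_apply, Matrix.diagonal_apply]⟩
  · rintro ⟨c, hcX⟩
    rw [Subgroup.mem_center_iff]
    intro g
    apply Units.ext
    simp only [Units.val_mul, hcX]
    rw [mul_smul_comm, smul_mul_assoc, mul_one, one_mul]


end Stmt10Aux



/-- If `k` has characteristic 0 and contains no primitive third root of unity, then
`PGL₃(k)` has no subgroup isomorphic to `(ℤ/3ℤ)²`. -/
theorem stmt10 (k : Type) [Field k] [CharZero k]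
    (h : ¬ ∃ ζ : k, ζ ^ 3 = 1 ∧ ζ ≠ 1) :
    ¬ ∃ φ : Multiplicative (ZMod 3 × ZMod 3) →*
        (GL (Fin 3) k ⧸ Subgroup.center (GL (Fin 3) k)),
      Function.Injective φ := by
  rintro ⟨φ, hinj⟩
  classical
  set Z := Subgroup.center (GL (Fin 3) k) with hZ
  let π : GL (Fin 3) k →* GL (Fin 3) k ⧸ Z := QuotientGroup.mk' Z
  -- preimages of 1 are nonzero scalar matrices
  have hone : ∀ X : GL (Fin 3) k, π X = 1 → ∃ c : k, c ≠ 0 ∧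
      (X : Matrix (Fin 3) (Fin 3) k) = c • 1 := by
    intro X hX
    have hmem : X ∈ Z := (QuotientGroup.eq_one_iff X).mp hX
    obtain ⟨c, hc⟩ := Stmt10Aux.mem_center_iff.mp hmem
    refine ⟨c, ?_, hc⟩
    intro hc0
    have hu : IsUnit (X : Matrix (Fin 3) (Fin 3) k).det :=
      (Matrix.isUnit_iff_isUnit_det _).mp X.isUnit
    rw [hc, hc0, zero_smul, Matrix.det_zero] at hu
    exact hu.ne_zero rfl
  have surj : Function.Surjective π := QuotientGroup.mk'_surjective Z
  obtain ⟨A', hA'⟩ := surj (φ (Multiplicative.ofAdd ((1 : ZMod 3), (0 : ZMod 3))))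
  obtain ⟨B', hB'⟩ := surj (φ (Multiplicative.ofAdd ((0 : ZMod 3), (1 : ZMod 3))))
  set A : Matrix (Fin 3) (Fin 3) k := (A' : Matrix (Fin 3) (Fin 3) k) with hA
  set B : Matrix (Fin 3) (Fin 3) k := (B' : Matrix (Fin 3) (Fin 3) k) with hB
  -- image of powers
  have hπpow : ∀ i j : ℕ, π (A' ^ i * B' ^ j)
      = φ (Multiplicative.ofAdd ((i : ZMod 3), (j : ZMod 3))) := by
    intro i j
    rw [_root_.map_mul, _root_.map_pow, _root_.map_pow, hA', hB', ← _root_.map_pow φ, ← _root_.map_pow φ, ← _root_.map_mul φ]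
    congr 1
    rw [← ofAdd_nsmul, ← ofAdd_nsmul, ← ofAdd_add]
    congr 1
    rw [Prod.smul_mk, Prod.smul_mk, Prod.mk_add_mk]
    simp [nsmul_eq_mul]
  -- cubes map to 1
  have hcube1 : ∀ i j : ℕ, π ((A' ^ i * B' ^ j) ^ 3) = 1 := by
    intro i j
    rw [_root_.map_pow, hπpow, ← _root_.map_pow φ, ← ofAdd_nsmul]
    have e : (3 : ℕ) • (((i : ZMod 3), (j : ZMod 3)) : ZMod 3 × ZMod 3) = 0 := by
      have : ∀ x : ZMod 3 × ZMod 3, (3 : ℕ) • x = 0 := by decide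
      exact this _
    rw [e, ofAdd_zero, _root_.map_one]
  -- nontrivial powers are not in the center
  have hnontriv : ∀ i j : ℕ, i < 3 → j < 3 → ¬(i = 0 ∧ j = 0) →
      π (A' ^ i * B' ^ j) ≠ 1 := by
    intro i j hi hj hij hcon
    rw [hπpow] at hcon
    have h1 : φ (Multiplicative.ofAdd ((i : ZMod 3), (j : ZMod 3))) = φ 1 := by
      rw [hcon, _root_.map_one]
    have h0 := hinj h1
    have h2 : (((i : ZMod 3), (j : ZMod 3)) : ZMod 3 × ZMod 3) = 0 := by
      have := congrArg Multiplicative.toAdd h0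
      simpa using this
    rw [Prod.ext_iff] at h2
    obtain ⟨h2i, h2j⟩ := h2
    have hdi : (3 : ℕ) ∣ i := (ZMod.natCast_eq_zero_iff i 3).mp h2i
    have hdj : (3 : ℕ) ∣ j := (ZMod.natCast_eq_zero_iff j 3).mp h2j
    exact hij ⟨by omega, by omega⟩
  -- A and B commute
  have hABcomm : A * B = B * A := by
    have hc1 : π (A' * B' * A'⁻¹ * B'⁻¹) = 1 := by
      rw [_root_.map_mul, _root_.map_mul, _root_.map_mul, _root_.map_inv, _root_.map_inv, hA', hB']
      have hsw : φ (Multiplicative.ofAdd ((1 : ZMod 3), (0 : ZMod 3)))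
          * φ (Multiplicative.ofAdd ((0 : ZMod 3), (1 : ZMod 3)))
          = φ (Multiplicative.ofAdd ((0 : ZMod 3), (1 : ZMod 3)))
          * φ (Multiplicative.ofAdd ((1 : ZMod 3), (0 : ZMod 3))) := by
        rw [← _root_.map_mul φ, ← _root_.map_mul φ, mul_comm]
      rw [hsw]
      group
    obtain ⟨lam, hl0, hl⟩ := hone _ hc1
    have hdetu : Matrix.GeneralLinearGroup.det (A' * B' * A'⁻¹ * B'⁻¹) = 1 := by
      rw [_root_.map_mul, _root_.map_mul, _root_.map_mul, _root_.map_inv, _root_.map_inv,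
        mul_comm (Matrix.GeneralLinearGroup.det A') (Matrix.GeneralLinearGroup.det B')]
      group
    have hdetm : ((A' * B' * A'⁻¹ * B'⁻¹ : GL (Fin 3) k) : Matrix (Fin 3) (Fin 3) k).det
        = 1 := by
      have h1 : ((Matrix.GeneralLinearGroup.det (A' * B' * A'⁻¹ * B'⁻¹) : kˣ) : k)
          = ((A' * B' * A'⁻¹ * B'⁻¹ : GL (Fin 3) k) : Matrix (Fin 3) (Fin 3) k).det := rfl
      rw [← h1, hdetu, Units.val_one]
    rw [hl, Matrix.det_smul, Matrix.det_one, mul_one] at hdetm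
    have hlam : lam = 1 := by
      by_contra hne
      exact h ⟨lam, by simpa using hdetm, hne⟩
    have hcomm1 : (A' * B' * A'⁻¹ * B'⁻¹ : GL (Fin 3) k) = 1 := by
      apply Units.ext
      rw [hl, hlam, one_smul]
      rfl
    have e : (A' * B') * (B' * A')⁻¹ = 1 := by
      rw [_root_.mul_inv_rev, ← mul_assoc]
      exact hcomm1
    have e2 : A' * B' = B' * A' := by
      rw [← mul_inv_eq_one]
      exact e
    have := congrArg Units.val e2
    simpa using this
  have hCom : Commute A B := hABcomm
  -- cubes are scalars
  obtain ⟨a, ha0, hA3u⟩ := hone (A' ^ 3) (by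
    have := hcube1 1 0
    simpa using this)
  obtain ⟨b, hb0, hB3u⟩ := hone (B' ^ 3) (by
    have := hcube1 0 1
    simpa using this)
  have hA3 : A ^ 3 = a • 1 := by rw [hA, ← Units.val_pow_eq_pow_val, hA3u]
  have hB3 : B ^ 3 = b • 1 := by rw [hB, ← Units.val_pow_eq_pow_val, hB3u]
  -- key facts about nontrivial elements
  have hkey : ∀ i j : ℕ, i < 3 → j < 3 → ¬(i = 0 ∧ j = 0) →
      (∀ x : k, A ^ i * B ^ j ≠ x • 1) ∧ (A ^ i * B ^ j).trace = 0 := by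
    intro i j hi hj hij
    have hcoe : ((A' ^ i * B' ^ j : GL (Fin 3) k) : Matrix (Fin 3) (Fin 3) k)
        = A ^ i * B ^ j := by
      rw [Units.val_mul, Units.val_pow_eq_pow_val, Units.val_pow_eq_pow_val]
    have hns : ∀ x : k, A ^ i * B ^ j ≠ x • 1 := by
      intro x hx
      apply hnontriv i j hi hj hij
      apply (QuotientGroup.eq_one_iff _).mpr
      exact Stmt10Aux.mem_center_iff.mpr ⟨x, by rw [hcoe]; exact hx⟩
    refine ⟨hns, ?_⟩
    obtain ⟨c, hc0, hc⟩ := hone ((A' ^ i * B' ^ j) ^ 3) (hcube1 i j)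
    have hcube : (A ^ i * B ^ j) ^ 3 = c • 1 := by
      rw [← hcoe, ← Units.val_pow_eq_pow_val, hc]
    exact Stmt10Aux.trace_eq_zero h hc0 hcube hns
  -- merging products of powers
  have hmerge : ∀ m l p q : ℕ, (A ^ m * B ^ l) * (A ^ p * B ^ q)
      = A ^ (m + p) * B ^ (l + q) := by
    intro m l p q
    calc (A ^ m * B ^ l) * (A ^ p * B ^ q)
        = A ^ m * ((B ^ l * A ^ p) * B ^ q) := by
          rw [mul_assoc, ← mul_assoc (B ^ l)]
      _ = A ^ m * ((A ^ p * B ^ l) * B ^ q) := by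
          rw [(hCom.symm.pow_pow l p).eq]
      _ = A ^ (m + p) * B ^ (l + q) := by
          rw [pow_add, pow_add, mul_assoc (A ^ p), ← mul_assoc (A ^ m) (A ^ p)]
  -- general trace formula
  have htrace : ∀ m l : ℕ, (A ^ m * B ^ l).trace
      = if 3 ∣ m ∧ 3 ∣ l then a ^ (m / 3) * b ^ (l / 3) * 3 else 0 := by
    intro m l
    have hAm : A ^ m = a ^ (m / 3) • A ^ (m % 3) := by
      conv_lhs => rw [← Nat.div_add_mod m 3]
      rw [pow_add, pow_mul, hA3, _root_.smul_pow, one_pow, smul_mul_assoc, one_mul]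
    have hBl : B ^ l = b ^ (l / 3) • B ^ (l % 3) := by
      conv_lhs => rw [← Nat.div_add_mod l 3]
      rw [pow_add, pow_mul, hB3, _root_.smul_pow, one_pow, smul_mul_assoc, one_mul]
    rw [hAm, hBl, smul_mul_assoc, mul_smul_comm, smul_smul, trace_smul]
    by_cases hdvd : 3 ∣ m ∧ 3 ∣ l
    · rw [if_pos hdvd]
      obtain ⟨hdm, hdl⟩ := hdvd
      have hm0 : m % 3 = 0 := by omega
      have hl0 : l % 3 = 0 := by omega
      rw [hm0, hl0, pow_zero, pow_zero, one_mul, trace_one]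
      simp [smul_eq_mul]
    · rw [if_neg hdvd]
      have hlt3 : (0:ℕ) < 3 := by norm_num
      have hne : ¬(m % 3 = 0 ∧ l % 3 = 0) := by
        intro ⟨hm, hl⟩
        exact hdvd ⟨Nat.dvd_of_mod_eq_zero hm, Nat.dvd_of_mod_eq_zero hl⟩
      rw [(hkey (m % 3) (l % 3) (Nat.mod_lt _ hlt3) (Nat.mod_lt _ hlt3) hne).2, smul_zero]
  -- the family of 9 commuting matrices
  set f : Fin 3 × Fin 3 → Matrix (Fin 3) (Fin 3) k :=
    fun p => A ^ (p.1 : ℕ) * B ^ (p.2 : ℕ) with hf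
  have h3k : (3 : k) ≠ 0 := by norm_num
  have hli : LinearIndependent k f := by
    rw [Fintype.linearIndependent_iff]
    intro x hx p'
    have e := congrArg
      (fun N => (N * (A ^ (3 - (p'.1 : ℕ)) * B ^ (3 - (p'.2 : ℕ)))).trace) hx
    simp only [Finset.sum_mul, smul_mul_assoc, trace_sum, trace_smul, zero_mul,
      trace_zero] at e
    have eterm : ∀ p : Fin 3 × Fin 3,
        (f p * (A ^ (3 - (p'.1 : ℕ)) * B ^ (3 - (p'.2 : ℕ)))).trace
        = if p = p' then a * b * 3 else 0 := by
      intro p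
      rw [hf, hmerge]
      rcases eq_or_ne p p' with rfl | hne
      · rw [if_pos rfl]
        have e1 : (p.1 : ℕ) + (3 - (p.1 : ℕ)) = 3 := by omega
        have e2 : (p.2 : ℕ) + (3 - (p.2 : ℕ)) = 3 := by omega
        rw [e1, e2, htrace]
        norm_num
      · rw [if_neg hne, htrace, if_neg]
        intro ⟨hd1, hd2⟩
        apply hne
        have hp1 : (p.1 : ℕ) < 3 := p.1.isLt
        have hp2 : (p.2 : ℕ) < 3 := p.2.isLt
        have hq1 : (p'.1 : ℕ) < 3 := p'.1.isLt
        have hq2 : (p'.2 : ℕ) < 3 := p'.2.isLt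
        have e1 : (p.1 : ℕ) = (p'.1 : ℕ) := by omega
        have e2 : (p.2 : ℕ) = (p'.2 : ℕ) := by omega
        exact Prod.ext (Fin.ext e1) (Fin.ext e2)
    rw [Finset.sum_congr rfl (fun p _ => by
      rw [eterm p, smul_ite, smul_zero, smul_eq_mul] :
        ∀ p ∈ Finset.univ, x p • (f p * (A ^ (3 - (p'.1 : ℕ)) * B ^ (3 - (p'.2 : ℕ)))).trace
          = if p = p' then x p * (a * b * 3) else 0)] at e
    rw [Finset.sum_ite_eq' Finset.univ p' (fun p => x p * (a * b * 3))] at e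
    simp only [Finset.mem_univ, if_true] at e
    have : x p' * (a * b * 3) = 0 := e
    rcases mul_eq_zero.mp this with h1 | h2
    · exact h1
    · exfalso
      rcases mul_eq_zero.mp h2 with h3 | h4
      · rcases mul_eq_zero.mp h3 with h5 | h6
        · exact ha0 h5
        · exact hb0 h6
      · exact h3k h4
  have hcard : Fintype.card (Fin 3 × Fin 3)
      = Module.finrank k (Matrix (Fin 3) (Fin 3) k) := by
    rw [Module.finrank_matrix]
    simp
  have hspan : Submodule.span k (Set.range f) = ⊤ :=
    hli.span_eq_top_of_card_eq_finrank hcard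
  -- everything commutes with A, so A is scalar: contradiction
  have hcommA : ∀ N : Matrix (Fin 3) (Fin 3) k, N * A = A * N := by
    intro N
    set L : Matrix (Fin 3) (Fin 3) k →ₗ[k] Matrix (Fin 3) (Fin 3) k :=
      LinearMap.mulRight k A - LinearMap.mulLeft k A with hL
    have hfker : ∀ p : Fin 3 × Fin 3, f p ∈ LinearMap.ker L := by
      intro p
      rw [LinearMap.mem_ker, hL, LinearMap.sub_apply, LinearMap.mulRight_apply,
        LinearMap.mulLeft_apply, sub_eq_zero, hf]
      have e1 : (A ^ (p.1 : ℕ) * B ^ (p.2 : ℕ)) * (A ^ 1 * B ^ 0)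
          = A ^ ((p.1 : ℕ) + 1) * B ^ ((p.2 : ℕ) + 0) := hmerge _ _ _ _
      have e2 : (A ^ 1 * B ^ 0) * (A ^ (p.1 : ℕ) * B ^ (p.2 : ℕ))
          = A ^ (1 + (p.1 : ℕ)) * B ^ (0 + (p.2 : ℕ)) := hmerge _ _ _ _
      rw [pow_one, pow_zero, mul_one] at e1 e2
      rw [e1, e2, Nat.add_comm, Nat.add_comm (p.2 : ℕ) 0]
    have hle : Submodule.span k (Set.range f) ≤ LinearMap.ker L := by
      rw [Submodule.span_le]
      rintro _ ⟨p, rfl⟩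
      exact hfker p
    rw [hspan, top_le_iff] at hle
    have hLN : L N = 0 := by rw [← LinearMap.mem_ker, hle]; trivial
    rw [hL, LinearMap.sub_apply, LinearMap.mulRight_apply, LinearMap.mulLeft_apply,
      sub_eq_zero] at hLN
    exact hLN
  have hrange : A ∈ Set.range (Matrix.scalar (Fin 3)) := by
    apply Matrix.mem_range_scalar_of_commute_single
    intro i j _
    exact hcommA _
  obtain ⟨cA, hcA⟩ := hrange
  obtain ⟨hnsA, -⟩ := hkey 1 0 (by norm_num) (by norm_num) (by simp)
  apply hnsA cA
  rw [pow_one, pow_zero, mul_one, ← hcA]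
  ext i j
  simp [Matrix.scalar_apply, Matrix.smul_apply, Matrix.one_apply, Matrix.diagonal_apply]
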